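/- Let (a_n) be a positive, decreasing real sequence with a_n → 0 and let u > 0. Then there exist L > 0 and N ∈ ℕ such that for all n ≥ N and all z ∈ ℝ, exp(-u·z) · ∫_{-a_n^{-1/2}(z - u·a_n)}^{∞} exp(-v²) dv ≤ L · exp(-u·|z|). -/
import Mathlib
open MeasureTheory

lemma gauss_integrable : Integrable (fun v : ℝ => Real.exp (-v ^ 2)) := by
  simpa using integrable_exp_neg_mul_sq (one_pos (α := ℝ))

lemma gauss_total : ∫ v : ℝ, Real.exp (-v ^ 2) = Real.sqrt Real.pi := by
  simpa using integral_gaussian 1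

lemma gauss_tail_le (t : ℝ) :
    ∫ v in Set.Ici t, Real.exp (-v ^ 2) ≤ Real.sqrt Real.pi := by
  rw [← gauss_total]
  exact setIntegral_le_integral gauss_integrable
    (Filter.Eventually.of_forall fun v => (Real.exp_pos _).le)

lemma gauss_tail_le' (t : ℝ) (ht : 0 ≤ t) :
    ∫ v in Set.Ici t, Real.exp (-v ^ 2) ≤ Real.sqrt Real.pi * Real.exp (-t ^ 2) := by
  have hshift : Integrable (fun v : ℝ => Real.exp (-(v - t) ^ 2)) :=
    gauss_integrable.comp_sub_right t
  have hint : Integrable (fun v : ℝ => Real.exp (-t ^ 2) * Real.exp (-(v - t) ^ 2)) :=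
    hshift.const_mul _
  have h1 : ∫ v in Set.Ici t, Real.exp (-v ^ 2)
      ≤ ∫ v in Set.Ici t, Real.exp (-t ^ 2) * Real.exp (-(v - t) ^ 2) := by
    apply setIntegral_mono_on gauss_integrable.integrableOn hint.integrableOn
      measurableSet_Ici
    intro v hv
    rw [← Real.exp_add]
    apply Real.exp_le_exp.mpr
    nlinarith [Set.mem_Ici.mp hv]
  have h3 : ∫ v in Set.Ici t, Real.exp (-(v - t) ^ 2) ≤ Real.sqrt Real.pi := by
    calc ∫ v in Set.Ici t, Real.exp (-(v - t) ^ 2)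
        ≤ ∫ v : ℝ, Real.exp (-(v - t) ^ 2) :=
          setIntegral_le_integral hshift
            (Filter.Eventually.of_forall fun v => (Real.exp_pos _).le)
      _ = ∫ v : ℝ, Real.exp (-v ^ 2) := integral_sub_right_eq_self (fun v => Real.exp (-v ^ 2)) t
      _ = Real.sqrt Real.pi := gauss_total
  calc ∫ v in Set.Ici t, Real.exp (-v ^ 2)
      ≤ ∫ v in Set.Ici t, Real.exp (-t ^ 2) * Real.exp (-(v - t) ^ 2) := h1
    _ = Real.exp (-t ^ 2) * ∫ v in Set.Ici t, Real.exp (-(v - t) ^ 2) :=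
        integral_const_mul _ _
    _ ≤ Real.exp (-t ^ 2) * Real.sqrt Real.pi := by
        exact mul_le_mul_of_nonneg_left h3 (Real.exp_pos _).le
    _ = Real.sqrt Real.pi * Real.exp (-t ^ 2) := mul_comm _ _

/-- Key intermediate estimate (4.2) in the proof of Lemma 4.1. -/
theorem exp_mul_gaussian_tail_bound
    (a : ℕ → ℝ) (ha_pos : ∀ n, 0 < a n)
    (ha_dec : ∀ m n, m ≤ n → a n ≤ a m)
    (ha_lim : Filter.Tendsto a Filter.atTop (nhds 0))
    (u : ℝ) (hu : 0 < u) :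
    ∃ L > (0 : ℝ), ∃ N : ℕ, ∀ n ≥ N, ∀ z : ℝ,
      Real.exp (-u * z) *
          ∫ v in Set.Ici (-(Real.sqrt (a n))⁻¹ * (z - u * a n)), Real.exp (-v ^ 2)
        ≤ L * Real.exp (-u * |z|) := by
  have hπ : 0 < Real.sqrt Real.pi := Real.sqrt_pos.mpr Real.pi_pos
  refine ⟨Real.sqrt Real.pi * Real.exp (4 * u ^ 2),
    mul_pos hπ (Real.exp_pos _), ?_⟩
  obtain ⟨N, hN⟩ := Filter.eventually_atTop.mp (ha_lim.eventually (gt_mem_nhds one_pos))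
  refine ⟨N, fun n hn z => ?_⟩
  have han : 0 < a n := ha_pos n
  have han1 : a n ≤ 1 := (hN n hn).le
  have hs : 0 < Real.sqrt (a n) := Real.sqrt_pos.mpr han
  have hs2 : Real.sqrt (a n) ^ 2 = a n := Real.sq_sqrt han.le
  set T : ℝ := -(Real.sqrt (a n))⁻¹ * (z - u * a n) with hT
  rcases le_or_gt 0 z with hz | hz
  · -- z ≥ 0 : crude bound
    rw [abs_of_nonneg hz]
    calc Real.exp (-u * z) * ∫ v in Set.Ici T, Real.exp (-v ^ 2)
        ≤ Real.exp (-u * z) * Real.sqrt Real.pi :=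
          mul_le_mul_of_nonneg_left (gauss_tail_le T) (Real.exp_pos _).le
      _ ≤ Real.sqrt Real.pi * Real.exp (4 * u ^ 2) * Real.exp (-u * z) := by
          rw [mul_comm]
          apply mul_le_mul_of_nonneg_right _ (Real.exp_pos _).le
          nlinarith [Real.one_le_exp (by positivity : (0:ℝ) ≤ 4 * u ^ 2)]
  · rw [abs_of_neg hz]
    rcases le_or_gt (-z) (2 * u * a n) with hsmall | hbig
    · -- |z| ≤ 2 u a n ≤ 2u
      calc Real.exp (-u * z) * ∫ v in Set.Ici T, Real.exp (-v ^ 2)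
          ≤ Real.exp (-u * z) * Real.sqrt Real.pi :=
            mul_le_mul_of_nonneg_left (gauss_tail_le T) (Real.exp_pos _).le
        _ ≤ Real.sqrt Real.pi * Real.exp (4 * u ^ 2) * Real.exp (-u * -z) := by
            rw [mul_comm, mul_assoc, ← Real.exp_add]
            apply mul_le_mul_of_nonneg_left _ hπ.le
            apply Real.exp_le_exp.mpr
            nlinarith
    · -- |z| > 2 u a n : use the decay of the tail
      have hTnn : 0 ≤ T := by
        rw [hT]
        have h1 : z - u * a n < 0 := by nlinarith
        have h2 : (0:ℝ) < (Real.sqrt (a n))⁻¹ := inv_pos.mpr hs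
        nlinarith
      have hT2 : T ^ 2 = (z - u * a n) ^ 2 / a n := by
        rw [hT]
        rw [mul_pow, neg_pow, inv_pow, hs2]
        ring
      have hkey : -2 * u * z ≤ T ^ 2 := by
        rw [hT2, le_div_iff₀ han]
        nlinarith
      calc Real.exp (-u * z) * ∫ v in Set.Ici T, Real.exp (-v ^ 2)
          ≤ Real.exp (-u * z) * (Real.sqrt Real.pi * Real.exp (-T ^ 2)) :=
            mul_le_mul_of_nonneg_left (gauss_tail_le' T hTnn) (Real.exp_pos _).le
        _ ≤ Real.sqrt Real.pi * Real.exp (4 * u ^ 2) * Real.exp (-u * -z) := by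
            rw [mul_comm, mul_assoc, mul_assoc, ← Real.exp_add, ← Real.exp_add]
            apply mul_le_mul_of_nonneg_left _ hπ.le
            apply Real.exp_le_exp.mpr
            nlinarith [sq_nonneg u]
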